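/- Let G be an acyclic digraph with distinct vertices s_1,t_1,s_2,t_2, and let H be obtained from G by adding new vertices u_1,u_2 and arcs t_1u_1, u_1s_1, t_2u_2, u_2s_2. Then H contains, as an induced subdigraph, the disjoint union of two directed cycles with no arcs between them if and only if G contains directed paths P_1 from s_1 to t_1 and P_2 from s_2 to t_2 such that the subdigraph of G induced by V(P_1) ∪ V(P_2) is exactly the disjoint union of P_1 and P_2. -/
import Mathlib


/-- A directed cycle in the digraph `G`: vertices `v 0, …, v (n-1)` (all distinct),
`v n = v 0`, with arcs `v i → v (i+1)` for all `i < n`, and `n ≥ 2`. -/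
def IsDiCycle {V : Type*} (G : V → V → Prop) (n : ℕ) (v : ℕ → V) : Prop :=
  2 ≤ n ∧ v n = v 0 ∧ (∀ i < n, ∀ j < n, v i = v j → i = j) ∧ ∀ i < n, G (v i) (v (i + 1))

/-- The digraph `H` obtained from `G` by adding two new vertices `u₁ = inr 0` and
`u₂ = inr 1` and the arcs `t₁ → u₁`, `u₁ → s₁`, `t₂ → u₂`, `u₂ → s₂`. -/
def Hrel {V : Type*} (G : V → V → Prop) (s₁ t₁ s₂ t₂ : V) :
    (V ⊕ Fin 2) → (V ⊕ Fin 2) → Prop := fun p q =>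
  match p, q with
  | Sum.inl a, Sum.inl b => G a b
  | Sum.inl a, Sum.inr i => (a = t₁ ∧ i = 0) ∨ (a = t₂ ∧ i = 1)
  | Sum.inr i, Sum.inl b => (i = 0 ∧ b = s₁) ∨ (i = 1 ∧ b = s₂)
  | Sum.inr _, Sum.inr _ => False

lemma has_inr {V : Type*} {G : V → V → Prop} (hacyclic : ¬ ∃ n v, IsDiCycle G n v)
    {s₁ t₁ s₂ t₂ : V} {n : ℕ} {f : ℕ → V ⊕ Fin 2} (hn : 2 ≤ n)
    (hinj : ∀ i < n, ∀ j < n, f i = f j → i = j)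
    (harc : ∀ i < n, Hrel G s₁ t₁ s₂ t₂ (f i) (f ((i + 1) % n))) :
    ∃ k < n, ∃ e, f k = Sum.inr e := by
  by_contra hc
  push_neg at hc
  have hall : ∀ i < n, ∃ x, f i = Sum.inl x := by
    intro i hi
    cases hfi : f i with
    | inl x => exact ⟨x, rfl⟩
    | inr e => exact absurd hfi (hc i hi e)
  have hne : Nonempty V := by
    obtain ⟨x, -⟩ := hall 0 (by omega); exact ⟨x⟩
  choose! Q hQ using hall
  apply hacyclic
  refine ⟨n, fun i => Q (i % n), hn, by simp, ?_, ?_⟩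
  · intro i hi j hj h
    simp only [Nat.mod_eq_of_lt hi, Nat.mod_eq_of_lt hj] at h
    exact hinj i hi j hj (by rw [hQ i hi, hQ j hj, h])
  · intro i hi
    have h := harc i hi
    rw [hQ i hi, hQ _ (Nat.mod_lt _ (by omega))] at h
    show G (Q (i % n)) (Q ((i + 1) % n))
    rw [Nat.mod_eq_of_lt hi]
    exact h
lemma mod_two_cases {a n : ℕ} (h : a < 2 * n) :
    a % n = if a < n then a else a - n := by
  split
  · exact Nat.mod_eq_of_lt ‹_›
  · rw [Nat.mod_eq_sub_mod (le_of_not_gt ‹_›)]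
    exact Nat.mod_eq_of_lt (by omega)

lemma mod_succ_eq {n : ℕ} (hn : 2 ≤ n) (a : ℕ) : (a % n + 1) % n = (a + 1) % n := by
  conv_rhs => rw [Nat.add_mod]
  rw [Nat.mod_eq_of_lt (show 1 < n by omega)]

lemma idx_surj {n k i : ℕ} (hk : k < n) (hi : i < n) (hik : i ≠ k) :
    ∃ j, j ≤ n - 2 ∧ (k + 1 + j) % n = i := by
  by_cases h : k + 1 ≤ i
  · exact ⟨i - k - 1, by omega, by
      rw [show k + 1 + (i - k - 1) = i by omega, Nat.mod_eq_of_lt hi]⟩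
  · exact ⟨i + n - k - 1, by omega, by
      rw [show k + 1 + (i + n - k - 1) = i + n by omega, Nat.add_mod_right,
        Nat.mod_eq_of_lt hi]⟩

lemma wrap_eq {n k : ℕ} (hn : 2 ≤ n) (hk : k < n) :
    ((k + 1 + (n - 2)) % n + 1) % n = k := by
  rw [mod_succ_eq hn, show k + 1 + (n - 2) + 1 = k + n by omega, Nat.add_mod_right,
    Nat.mod_eq_of_lt hk]

lemma extract {V : Type*} {G : V → V → Prop} {s₁ t₁ s₂ t₂ : V} {e : Fin 2} {s t : V}
    (hout : ∀ x, Hrel G s₁ t₁ s₂ t₂ (Sum.inr e) (Sum.inl x) → x = s)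
    (hin : ∀ x, Hrel G s₁ t₁ s₂ t₂ (Sum.inl x) (Sum.inr e) → x = t)
    {n : ℕ} {f : ℕ → V ⊕ Fin 2} (hn : 2 ≤ n)
    (hinj : ∀ i < n, ∀ j < n, f i = f j → i = j)
    {k : ℕ} (hk : k < n) (hfk : f k = Sum.inr e)
    (honly : ∀ i < n, i ≠ k → ∃ x, f i = Sum.inl x)
    (harc : ∀ i < n, Hrel G s₁ t₁ s₂ t₂ (f i) (f ((i + 1) % n))) :
    ∃ P : ℕ → V, P 0 = s ∧ P (n - 2) = t ∧
      (∀ i ≤ n - 2, f ((k + 1 + i) % n) = Sum.inl (P i)) ∧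
      (∀ i ≤ n - 2, ∀ j ≤ n - 2, P i = P j → i = j) ∧
      (∀ i < n - 2, G (P i) (P (i + 1))) := by
  have hidx : ∀ i ≤ n - 2, (k + 1 + i) % n < n ∧ (k + 1 + i) % n ≠ k := by
    intro i hi
    refine ⟨Nat.mod_lt _ (by omega), ?_⟩
    rw [mod_two_cases (by omega)]
    split <;> omega
  have : Nonempty V := ⟨s⟩
  choose! Q hQ using honly
  have hmap : ∀ i ≤ n - 2, f ((k + 1 + i) % n) = Sum.inl (Q ((k + 1 + i) % n)) :=
    fun i hi => hQ _ (hidx i hi).1 (hidx i hi).2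
  refine ⟨fun i => Q ((k + 1 + i) % n), ?_, ?_, hmap, ?_, ?_⟩
  · have h := harc k hk
    rw [hfk] at h
    have h0 := hmap 0 (by omega)
    rw [show k + 1 + 0 = k + 1 from rfl] at h0
    rw [h0] at h
    exact hout _ h
  · have hp := hmap (n - 2) le_rfl
    have h := harc _ (hidx (n - 2) le_rfl).1
    rw [wrap_eq hn hk, hfk, hp] at h
    exact hin _ h
  · intro i hi j hj hij
    have h2 : f ((k + 1 + i) % n) = f ((k + 1 + j) % n) := by
      simp only [] at hij
      rw [hmap i hi, hmap j hj]
      exact congrArg _ hij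
    have h3 := hinj _ (hidx i hi).1 _ (hidx j hj).1 h2
    rw [mod_two_cases (show k + 1 + i < 2 * n by omega),
      mod_two_cases (show k + 1 + j < 2 * n by omega)] at h3
    split_ifs at h3 <;> omega
  · intro i hi
    have h := harc _ (hidx i (by omega)).1
    rw [hmap i (by omega), mod_succ_eq hn,
      show k + 1 + i + 1 = k + 1 + (i + 1) from rfl, hmap (i + 1) (by omega)] at h
    exact h

lemma fwd_core {V : Type*} (G : V → V → Prop) (s₁ t₁ s₂ t₂ : V)
    {n₁ n₂ : ℕ} {f g : ℕ → V ⊕ Fin 2}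
    (hn₁ : 2 ≤ n₁) (hn₂ : 2 ≤ n₂)
    (hfinj : ∀ i < n₁, ∀ j < n₁, f i = f j → i = j)
    (hginj : ∀ i < n₂, ∀ j < n₂, g i = g j → i = j)
    (hdisj : ∀ i < n₁, ∀ j < n₂, f i ≠ g j)
    (hind : ∀ a b : V ⊕ Fin 2,
        ((∃ i < n₁, f i = a) ∨ (∃ i < n₂, g i = a)) →
        ((∃ i < n₁, f i = b) ∨ (∃ i < n₂, g i = b)) →
        (Hrel G s₁ t₁ s₂ t₂ a b ↔
          ((∃ i < n₁, f i = a ∧ f ((i + 1) % n₁) = b) ∨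
            (∃ i < n₂, g i = a ∧ g ((i + 1) % n₂) = b))))
    {k₁ k₂ : ℕ} (hk₁ : k₁ < n₁) (hk₂ : k₂ < n₂)
    (hfk : f k₁ = Sum.inr 0) (hgk : g k₂ = Sum.inr 1)
    (honf : ∀ i < n₁, i ≠ k₁ → ∃ x, f i = Sum.inl x)
    (hong : ∀ i < n₂, i ≠ k₂ → ∃ x, g i = Sum.inl x) :
    (∃ (m₁ m₂ : ℕ) (P₁ P₂ : ℕ → V),
      P₁ 0 = s₁ ∧ P₁ m₁ = t₁ ∧ P₂ 0 = s₂ ∧ P₂ m₂ = t₂ ∧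
      (∀ i ≤ m₁, ∀ j ≤ m₁, P₁ i = P₁ j → i = j) ∧
      (∀ i ≤ m₂, ∀ j ≤ m₂, P₂ i = P₂ j → i = j) ∧
      (∀ i < m₁, G (P₁ i) (P₁ (i + 1))) ∧
      (∀ i < m₂, G (P₂ i) (P₂ (i + 1))) ∧
      (∀ i ≤ m₁, ∀ j ≤ m₂, P₁ i ≠ P₂ j) ∧
      (∀ a b : V,
        ((∃ i ≤ m₁, P₁ i = a) ∨ (∃ i ≤ m₂, P₂ i = a)) →
        ((∃ i ≤ m₁, P₁ i = b) ∨ (∃ i ≤ m₂, P₂ i = b)) →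
        (G a b ↔
          ((∃ i < m₁, P₁ i = a ∧ P₁ (i + 1) = b) ∨
            (∃ i < m₂, P₂ i = a ∧ P₂ (i + 1) = b))))) := by
  have harcf : ∀ i < n₁, Hrel G s₁ t₁ s₂ t₂ (f i) (f ((i + 1) % n₁)) := fun i hi =>
    (hind _ _ (Or.inl ⟨i, hi, rfl⟩) (Or.inl ⟨_, Nat.mod_lt _ (by omega), rfl⟩)).mpr
      (Or.inl ⟨i, hi, rfl, rfl⟩)
  have harcg : ∀ i < n₂, Hrel G s₁ t₁ s₂ t₂ (g i) (g ((i + 1) % n₂)) := fun i hi =>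
    (hind _ _ (Or.inr ⟨i, hi, rfl⟩) (Or.inr ⟨_, Nat.mod_lt _ (by omega), rfl⟩)).mpr
      (Or.inr ⟨i, hi, rfl, rfl⟩)
  have hout0 : ∀ x, Hrel G s₁ t₁ s₂ t₂ (Sum.inr 0) (Sum.inl x) → x = s₁ := by
    rintro x (⟨-, h⟩ | ⟨h, -⟩)
    · exact h
    · exact absurd h (by decide)
  have hin0 : ∀ x, Hrel G s₁ t₁ s₂ t₂ (Sum.inl x) (Sum.inr 0) → x = t₁ := by
    rintro x (⟨h, -⟩ | ⟨-, h⟩)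
    · exact h
    · exact absurd h (by decide)
  have hout1 : ∀ x, Hrel G s₁ t₁ s₂ t₂ (Sum.inr 1) (Sum.inl x) → x = s₂ := by
    rintro x (⟨h, -⟩ | ⟨-, h⟩)
    · exact absurd h (by decide)
    · exact h
  have hin1 : ∀ x, Hrel G s₁ t₁ s₂ t₂ (Sum.inl x) (Sum.inr 1) → x = t₂ := by
    rintro x (⟨-, h⟩ | ⟨h, -⟩)
    · exact absurd h (by decide)
    · exact h
  obtain ⟨P₁, hP10, hP1m, hmap₁, hinj₁, harc₁⟩ :=
    extract hout0 hin0 hn₁ hfinj hk₁ hfk honf harcf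
  obtain ⟨P₂, hP20, hP2m, hmap₂, hinj₂, harc₂⟩ :=
    extract hout1 hin1 hn₂ hginj hk₂ hgk hong harcg
  refine ⟨n₁ - 2, n₂ - 2, P₁, P₂, hP10, hP1m, hP20, hP2m, hinj₁, hinj₂, harc₁, harc₂, ?_, ?_⟩
  · intro i hi j hj h
    exact hdisj _ (Nat.mod_lt _ (by omega)) _ (Nat.mod_lt _ (by omega))
      (by rw [hmap₁ i hi, hmap₂ j hj, h] :
        f ((k₁ + 1 + i) % n₁) = g ((k₂ + 1 + j) % n₂))
  · intro a b ha hb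
    have haH : (∃ i < n₁, f i = Sum.inl a) ∨ (∃ i < n₂, g i = Sum.inl a) := by
      rcases ha with ⟨i, hi, rfl⟩ | ⟨i, hi, rfl⟩
      · exact Or.inl ⟨_, Nat.mod_lt _ (by omega), hmap₁ i hi⟩
      · exact Or.inr ⟨_, Nat.mod_lt _ (by omega), hmap₂ i hi⟩
    have hbH : (∃ i < n₁, f i = Sum.inl b) ∨ (∃ i < n₂, g i = Sum.inl b) := by
      rcases hb with ⟨i, hi, rfl⟩ | ⟨i, hi, rfl⟩
      · exact Or.inl ⟨_, Nat.mod_lt _ (by omega), hmap₁ i hi⟩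
      · exact Or.inr ⟨_, Nat.mod_lt _ (by omega), hmap₂ i hi⟩
    have key := hind (Sum.inl a) (Sum.inl b) haH hbH
    constructor
    · intro hG
      rcases key.mp hG with ⟨i, hi, hia, hib⟩ | ⟨i, hi, hia, hib⟩
      · have hik : i ≠ k₁ := by
          intro h; rw [h, hfk] at hia; exact absurd hia (by simp)
        obtain ⟨j, hj, hji⟩ := idx_surj hk₁ hi hik
        have hja : P₁ j = a := by
          have h1 := hmap₁ j hj
          rw [hji, hia] at h1
          exact (Sum.inl.injEq _ _ ▸ h1).symm
        have hjm : j < n₁ - 2 := by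
          rcases Nat.lt_or_ge j (n₁ - 2) with h | h
          · exact h
          · exfalso
            have hje : j = n₁ - 2 := by omega
            rw [← hji, hje, wrap_eq hn₁ hk₁, hfk] at hib
            exact absurd hib (by simp)
        have hjb : P₁ (j + 1) = b := by
          have h1 := hmap₁ (j + 1) (by omega)
          rw [show k₁ + 1 + (j + 1) = k₁ + 1 + j + 1 from rfl, ← mod_succ_eq hn₁,
            hji, hib] at h1
          exact (Sum.inl.injEq _ _ ▸ h1).symm
        exact Or.inl ⟨j, hjm, hja, hjb⟩
      · have hik : i ≠ k₂ := by
          intro h; rw [h, hgk] at hia; exact absurd hia (by simp)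
        obtain ⟨j, hj, hji⟩ := idx_surj hk₂ hi hik
        have hja : P₂ j = a := by
          have h1 := hmap₂ j hj
          rw [hji, hia] at h1
          exact (Sum.inl.injEq _ _ ▸ h1).symm
        have hjm : j < n₂ - 2 := by
          rcases Nat.lt_or_ge j (n₂ - 2) with h | h
          · exact h
          · exfalso
            have hje : j = n₂ - 2 := by omega
            rw [← hji, hje, wrap_eq hn₂ hk₂, hgk] at hib
            exact absurd hib (by simp)
        have hjb : P₂ (j + 1) = b := by
          have h1 := hmap₂ (j + 1) (by omega)
          rw [show k₂ + 1 + (j + 1) = k₂ + 1 + j + 1 from rfl, ← mod_succ_eq hn₂,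
            hji, hib] at h1
          exact (Sum.inl.injEq _ _ ▸ h1).symm
        exact Or.inr ⟨j, hjm, hja, hjb⟩
    · intro h
      apply key.mpr
      rcases h with ⟨j, hj, hja, hjb⟩ | ⟨j, hj, hja, hjb⟩
      · refine Or.inl ⟨(k₁ + 1 + j) % n₁, Nat.mod_lt _ (by omega), ?_, ?_⟩
        · rw [hmap₁ j (by omega), hja]
        · rw [mod_succ_eq hn₁, show k₁ + 1 + j + 1 = k₁ + 1 + (j + 1) from rfl,
            hmap₁ (j + 1) (by omega), hjb]
      · refine Or.inr ⟨(k₂ + 1 + j) % n₂, Nat.mod_lt _ (by omega), ?_, ?_⟩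
        · rw [hmap₂ j (by omega), hja]
        · rw [mod_succ_eq hn₂, show k₂ + 1 + j + 1 = k₂ + 1 + (j + 1) from rfl,
            hmap₂ (j + 1) (by omega), hjb]
lemma stmt17_fwd {V : Type*} (G : V → V → Prop)
    (hacyclic : ¬ ∃ n v, IsDiCycle G n v)
    (s₁ t₁ s₂ t₂ : V) :
    (∃ (n₁ n₂ : ℕ) (f g : ℕ → V ⊕ Fin 2),
      2 ≤ n₁ ∧ 2 ≤ n₂ ∧ f n₁ = f 0 ∧ g n₂ = g 0 ∧
      (∀ i < n₁, ∀ j < n₁, f i = f j → i = j) ∧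
      (∀ i < n₂, ∀ j < n₂, g i = g j → i = j) ∧
      (∀ i < n₁, ∀ j < n₂, f i ≠ g j) ∧
      (∀ a b : V ⊕ Fin 2,
        ((∃ i < n₁, f i = a) ∨ (∃ i < n₂, g i = a)) →
        ((∃ i < n₁, f i = b) ∨ (∃ i < n₂, g i = b)) →
        (Hrel G s₁ t₁ s₂ t₂ a b ↔
          ((∃ i < n₁, f i = a ∧ f ((i + 1) % n₁) = b) ∨
            (∃ i < n₂, g i = a ∧ g ((i + 1) % n₂) = b))))) →
    (∃ (m₁ m₂ : ℕ) (P₁ P₂ : ℕ → V),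
      P₁ 0 = s₁ ∧ P₁ m₁ = t₁ ∧ P₂ 0 = s₂ ∧ P₂ m₂ = t₂ ∧
      (∀ i ≤ m₁, ∀ j ≤ m₁, P₁ i = P₁ j → i = j) ∧
      (∀ i ≤ m₂, ∀ j ≤ m₂, P₂ i = P₂ j → i = j) ∧
      (∀ i < m₁, G (P₁ i) (P₁ (i + 1))) ∧
      (∀ i < m₂, G (P₂ i) (P₂ (i + 1))) ∧
      (∀ i ≤ m₁, ∀ j ≤ m₂, P₁ i ≠ P₂ j) ∧
      (∀ a b : V,
        ((∃ i ≤ m₁, P₁ i = a) ∨ (∃ i ≤ m₂, P₂ i = a)) →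
        ((∃ i ≤ m₁, P₁ i = b) ∨ (∃ i ≤ m₂, P₂ i = b)) →
        (G a b ↔
          ((∃ i < m₁, P₁ i = a ∧ P₁ (i + 1) = b) ∨
            (∃ i < m₂, P₂ i = a ∧ P₂ (i + 1) = b))))) := by
  rintro ⟨n₁, n₂, f, g, hn₁, hn₂, hf0, hg0, hfinj, hginj, hdisj, hind⟩
  have harcf : ∀ i < n₁, Hrel G s₁ t₁ s₂ t₂ (f i) (f ((i + 1) % n₁)) := fun i hi =>
    (hind _ _ (Or.inl ⟨i, hi, rfl⟩) (Or.inl ⟨_, Nat.mod_lt _ (by omega), rfl⟩)).mpr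
      (Or.inl ⟨i, hi, rfl, rfl⟩)
  have harcg : ∀ i < n₂, Hrel G s₁ t₁ s₂ t₂ (g i) (g ((i + 1) % n₂)) := fun i hi =>
    (hind _ _ (Or.inr ⟨i, hi, rfl⟩) (Or.inr ⟨_, Nat.mod_lt _ (by omega), rfl⟩)).mpr
      (Or.inr ⟨i, hi, rfl, rfl⟩)
  obtain ⟨k₁, hk₁, e₁, hfk₁⟩ := has_inr hacyclic hn₁ hfinj harcf
  obtain ⟨k₂, hk₂, e₂, hgk₂⟩ := has_inr hacyclic hn₂ hginj harcg
  have hee : e₁ ≠ e₂ := fun h => hdisj k₁ hk₁ k₂ hk₂ (by rw [hfk₁, hgk₂, h])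
  have honf : ∀ i < n₁, i ≠ k₁ → ∃ x, f i = Sum.inl x := by
    intro i hi hik
    cases hfi : f i with
    | inl x => exact ⟨x, rfl⟩
    | inr e =>
      exfalso
      by_cases he : e = e₁
      · exact hik (hfinj i hi k₁ hk₁ (by rw [hfi, hfk₁, he]))
      · have hv : e = e₂ := by
          have h1 := e.isLt; have h2 := e₁.isLt; have h3 := e₂.isLt
          have h4 : e.val ≠ e₁.val := fun hh => he (Fin.ext hh)
          have h5 : e₁.val ≠ e₂.val := fun hh => hee (Fin.ext hh)
          exact Fin.ext (by omega)
        exact hdisj i hi k₂ hk₂ (by rw [hfi, hgk₂, hv])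
  have hong : ∀ i < n₂, i ≠ k₂ → ∃ x, g i = Sum.inl x := by
    intro i hi hik
    cases hgi : g i with
    | inl x => exact ⟨x, rfl⟩
    | inr e =>
      exfalso
      by_cases he : e = e₂
      · exact hik (hginj i hi k₂ hk₂ (by rw [hgi, hgk₂, he]))
      · have hv : e = e₁ := by
          have h1 := e.isLt; have h2 := e₁.isLt; have h3 := e₂.isLt
          have h4 : e.val ≠ e₂.val := fun hh => he (Fin.ext hh)
          have h5 : e₁.val ≠ e₂.val := fun hh => hee (Fin.ext hh)
          exact Fin.ext (by omega)
        exact hdisj k₁ hk₁ i hi (by rw [hgi, hfk₁, hv])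
  rcases (by decide : ∀ a : Fin 2, a = 0 ∨ a = 1) e₁ with he₁ | he₁
  · have he₂ : e₂ = 1 := by
      rcases (by decide : ∀ a : Fin 2, a = 0 ∨ a = 1) e₂ with h | h
      · exact absurd (he₁.trans h.symm) hee
      · exact h
    rw [he₁] at hfk₁; rw [he₂] at hgk₂
    exact fwd_core G s₁ t₁ s₂ t₂ hn₁ hn₂ hfinj hginj hdisj hind hk₁ hk₂ hfk₁ hgk₂ honf hong
  · have he₂ : e₂ = 0 := by
      rcases (by decide : ∀ a : Fin 2, a = 0 ∨ a = 1) e₂ with h | h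
      · exact h
      · exact absurd (he₁.trans h.symm) hee
    rw [he₁] at hfk₁; rw [he₂] at hgk₂
    exact fwd_core G s₁ t₁ s₂ t₂ hn₂ hn₁ hginj hfinj
      (fun i hi j hj => (hdisj j hj i hi).symm)
      (fun a b ha hb => ((hind a b ha.symm hb.symm).trans or_comm))
      hk₂ hk₁ hgk₂ hfk₁ hong honf

lemma stmt17_bwd {V : Type*} (G : V → V → Prop)
    (s₁ t₁ s₂ t₂ : V) :
    (∃ (m₁ m₂ : ℕ) (P₁ P₂ : ℕ → V),
      P₁ 0 = s₁ ∧ P₁ m₁ = t₁ ∧ P₂ 0 = s₂ ∧ P₂ m₂ = t₂ ∧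
      (∀ i ≤ m₁, ∀ j ≤ m₁, P₁ i = P₁ j → i = j) ∧
      (∀ i ≤ m₂, ∀ j ≤ m₂, P₂ i = P₂ j → i = j) ∧
      (∀ i < m₁, G (P₁ i) (P₁ (i + 1))) ∧
      (∀ i < m₂, G (P₂ i) (P₂ (i + 1))) ∧
      (∀ i ≤ m₁, ∀ j ≤ m₂, P₁ i ≠ P₂ j) ∧
      (∀ a b : V,
        ((∃ i ≤ m₁, P₁ i = a) ∨ (∃ i ≤ m₂, P₂ i = a)) →
        ((∃ i ≤ m₁, P₁ i = b) ∨ (∃ i ≤ m₂, P₂ i = b)) →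
        (G a b ↔
          ((∃ i < m₁, P₁ i = a ∧ P₁ (i + 1) = b) ∨
            (∃ i < m₂, P₂ i = a ∧ P₂ (i + 1) = b))))) →
    (∃ (n₁ n₂ : ℕ) (f g : ℕ → V ⊕ Fin 2),
      2 ≤ n₁ ∧ 2 ≤ n₂ ∧ f n₁ = f 0 ∧ g n₂ = g 0 ∧
      (∀ i < n₁, ∀ j < n₁, f i = f j → i = j) ∧
      (∀ i < n₂, ∀ j < n₂, g i = g j → i = j) ∧
      (∀ i < n₁, ∀ j < n₂, f i ≠ g j) ∧
      (∀ a b : V ⊕ Fin 2,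
        ((∃ i < n₁, f i = a) ∨ (∃ i < n₂, g i = a)) →
        ((∃ i < n₁, f i = b) ∨ (∃ i < n₂, g i = b)) →
        (Hrel G s₁ t₁ s₂ t₂ a b ↔
          ((∃ i < n₁, f i = a ∧ f ((i + 1) % n₁) = b) ∨
            (∃ i < n₂, g i = a ∧ g ((i + 1) % n₂) = b))))) := by
  rintro ⟨m₁, m₂, P₁, P₂, h1, h2, h3, h4, h5, h6, h7, h8, h9, h10⟩
  set F : ℕ → V ⊕ Fin 2 :=
    fun i => if i ≤ m₁ then Sum.inl (P₁ i) else if i = m₁ + 1 then Sum.inr 0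
      else Sum.inl s₁ with hF
  set Gg : ℕ → V ⊕ Fin 2 :=
    fun i => if i ≤ m₂ then Sum.inl (P₂ i) else if i = m₂ + 1 then Sum.inr 1
      else Sum.inl s₂ with hGg
  have hFval : ∀ i ≤ m₁, F i = Sum.inl (P₁ i) := by
    intro i hi; simp only [hF, if_pos hi]
  have hGval : ∀ i ≤ m₂, Gg i = Sum.inl (P₂ i) := by
    intro i hi; simp only [hGg, if_pos hi]
  have hFu : F (m₁ + 1) = Sum.inr 0 := by
    simp only [hF]; rw [if_neg (by omega)]; simp
  have hGu : Gg (m₂ + 1) = Sum.inr 1 := by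
    simp only [hGg]; rw [if_neg (by omega)]; simp
  have hFn : F (m₁ + 2) = Sum.inl s₁ := by
    simp only [hF]; rw [if_neg (by omega), if_neg (by omega)]
  have hGn : Gg (m₂ + 2) = Sum.inl s₂ := by
    simp only [hGg]; rw [if_neg (by omega), if_neg (by omega)]
  -- characterize F values for i < m₁ + 2
  have hFshape : ∀ i < m₁ + 2, F i = Sum.inr 0 ∨ (i ≤ m₁ ∧ F i = Sum.inl (P₁ i)) := by
    intro i hi
    by_cases h : i ≤ m₁
    · exact Or.inr ⟨h, hFval i h⟩
    · have : i = m₁ + 1 := by omega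
      exact Or.inl (this ▸ hFu)
  have hGshape : ∀ i < m₂ + 2, Gg i = Sum.inr 1 ∨ (i ≤ m₂ ∧ Gg i = Sum.inl (P₂ i)) := by
    intro i hi
    by_cases h : i ≤ m₂
    · exact Or.inr ⟨h, hGval i h⟩
    · have : i = m₂ + 1 := by omega
      exact Or.inl (this ▸ hGu)
  refine ⟨m₁ + 2, m₂ + 2, F, Gg, by omega, by omega, ?_, ?_, ?_, ?_, ?_, ?_⟩
  · rw [hFn, hFval 0 (by omega), h1]
  · rw [hGn, hGval 0 (by omega), h3]
  · -- injectivity of F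
    intro i hi j hj hij
    rcases hFshape i hi with hFi | ⟨ha, hFi⟩ <;>
      rcases hFshape j hj with hFj | ⟨hb, hFj⟩
    · have hi' : ¬ i ≤ m₁ := fun h => by rw [hFval i h] at hFi; simp at hFi
      have hj' : ¬ j ≤ m₁ := fun h => by rw [hFval j h] at hFj; simp at hFj
      omega
    · rw [hFi, hFj] at hij; simp at hij
    · rw [hFi, hFj] at hij; simp at hij
    · rw [hFi, hFj] at hij
      exact h5 _ ha _ hb (Sum.inl.inj hij)
  · intro i hi j hj hij
    rcases hGshape i hi with hGi | ⟨ha, hGi⟩ <;>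
      rcases hGshape j hj with hGj | ⟨hb, hGj⟩
    · have hi' : ¬ i ≤ m₂ := fun h => by rw [hGval i h] at hGi; simp at hGi
      have hj' : ¬ j ≤ m₂ := fun h => by rw [hGval j h] at hGj; simp at hGj
      omega
    · rw [hGi, hGj] at hij; simp at hij
    · rw [hGi, hGj] at hij; simp at hij
    · rw [hGi, hGj] at hij
      exact h6 _ ha _ hb (Sum.inl.inj hij)
  · -- disjointness
    intro i hi j hj hij
    rcases hFshape i hi with hFi | ⟨ha, hFi⟩ <;>
      rcases hGshape j hj with hGj | ⟨hb, hGj⟩ <;>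
      rw [hFi, hGj] at hij <;> simp at hij
    exact h9 _ ha _ hb hij
  · -- the induced iff
    intro a b ha hb
    have hshape : ∀ c : V ⊕ Fin 2,
        ((∃ i < m₁ + 2, F i = c) ∨ (∃ i < m₂ + 2, Gg i = c)) →
        (∃ x, c = Sum.inl x ∧ ((∃ i ≤ m₁, P₁ i = x) ∨ (∃ i ≤ m₂, P₂ i = x))) ∨
          c = Sum.inr 0 ∨ c = Sum.inr 1 := by
      rintro c (⟨i, hi, rfl⟩ | ⟨i, hi, rfl⟩)
      · rcases hFshape i hi with h | ⟨h, h'⟩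
        · exact Or.inr (Or.inl h)
        · exact Or.inl ⟨P₁ i, h', Or.inl ⟨i, h, rfl⟩⟩
      · rcases hGshape i hi with h | ⟨h, h'⟩
        · exact Or.inr (Or.inr h)
        · exact Or.inl ⟨P₂ i, h', Or.inr ⟨i, h, rfl⟩⟩
    have hFonly : ∀ i < m₁ + 2, ∀ e, F i = Sum.inr e → i = m₁ + 1 ∧ e = 0 := by
      intro i hi e h
      rcases hFshape i hi with h' | ⟨h1, h'⟩
      · rw [h'] at h
        refine ⟨?_, (Sum.inr.inj h).symm⟩
        by_contra hc
        have : i ≤ m₁ := by omega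
        rw [hFval i this] at h'; simp at h'
      · rw [h'] at h; simp at h
    have hGonly : ∀ i < m₂ + 2, ∀ e, Gg i = Sum.inr e → i = m₂ + 1 ∧ e = 1 := by
      intro i hi e h
      rcases hGshape i hi with h' | ⟨h1, h'⟩
      · rw [h'] at h
        refine ⟨?_, (Sum.inr.inj h).symm⟩
        by_contra hc
        have : i ≤ m₂ := by omega
        rw [hGval i this] at h'; simp at h'
      · rw [h'] at h; simp at h
    have hFwrap : F ((m₁ + 1 + 1) % (m₁ + 2)) = Sum.inl s₁ := by
      rw [show m₁ + 1 + 1 = m₁ + 2 from rfl, Nat.mod_self, hFval 0 (by omega), h1]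
    have hGwrap : Gg ((m₂ + 1 + 1) % (m₂ + 2)) = Sum.inl s₂ := by
      rw [show m₂ + 1 + 1 = m₂ + 2 from rfl, Nat.mod_self, hGval 0 (by omega), h3]
    rcases hshape a ha with ⟨x, rfl, hx⟩ | rfl | rfl <;>
      rcases hshape b hb with ⟨y, rfl, hy⟩ | rfl | rfl
    · -- inl x, inl y
      show G x y ↔ _
      rw [h10 x y hx hy]
      constructor
      · rintro (⟨i, hi, hia, hib⟩ | ⟨i, hi, hia, hib⟩)
        · exact Or.inl ⟨i, by omega, by rw [hFval i (by omega), hia], by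
            rw [Nat.mod_eq_of_lt (by omega), hFval (i + 1) (by omega), hib]⟩
        · exact Or.inr ⟨i, by omega, by rw [hGval i (by omega), hia], by
            rw [Nat.mod_eq_of_lt (by omega), hGval (i + 1) (by omega), hib]⟩
      · rintro (⟨i, hi, hia, hib⟩ | ⟨i, hi, hia, hib⟩)
        · have him : i ≤ m₁ := by
            by_contra h
            have : i = m₁ + 1 := by omega
            rw [this, hFu] at hia; simp at hia
          have hlt : i < m₁ := by
            by_contra h
            have hie : i = m₁ := by omega
            rw [hie, Nat.mod_eq_of_lt (by omega), hFu] at hib; simp at hib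
          rw [hFval i him] at hia
          rw [Nat.mod_eq_of_lt (by omega), hFval (i + 1) (by omega)] at hib
          exact Or.inl ⟨i, hlt, Sum.inl.inj hia, Sum.inl.inj hib⟩
        · have him : i ≤ m₂ := by
            by_contra h
            have : i = m₂ + 1 := by omega
            rw [this, hGu] at hia; simp at hia
          have hlt : i < m₂ := by
            by_contra h
            have hie : i = m₂ := by omega
            rw [hie, Nat.mod_eq_of_lt (by omega), hGu] at hib; simp at hib
          rw [hGval i him] at hia
          rw [Nat.mod_eq_of_lt (by omega), hGval (i + 1) (by omega)] at hib
          exact Or.inr ⟨i, hlt, Sum.inl.inj hia, Sum.inl.inj hib⟩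
    · -- inl x, inr 0
      have hH : Hrel G s₁ t₁ s₂ t₂ (Sum.inl x) (Sum.inr 0) ↔ x = t₁ := by
        constructor
        · rintro (⟨h, -⟩ | ⟨-, h⟩)
          · exact h
          · exact absurd h (by decide)
        · intro h; exact Or.inl ⟨h, rfl⟩
      rw [hH]
      constructor
      · intro hx1
        exact Or.inl ⟨m₁, by omega, by rw [hFval m₁ le_rfl, h2, hx1], by
          rw [Nat.mod_eq_of_lt (by omega), hFu]⟩
      · rintro (⟨i, hi, hia, hib⟩ | ⟨i, hi, hia, hib⟩)
        · have him : i = m₁ := by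
            have h' := hFonly _ (Nat.mod_lt _ (by omega)) _ hib
            by_cases h1 : i = m₁ + 1
            · rw [h1, show m₁ + 1 + 1 = m₁ + 2 from rfl, Nat.mod_self] at h'
              omega
            · rw [Nat.mod_eq_of_lt (by omega)] at h'
              omega
          rw [him, hFval m₁ le_rfl] at hia
          have := Sum.inl.inj hia
          rw [← this, h2]
        · exfalso
          have h' := hGonly _ (Nat.mod_lt _ (by omega)) _ hib
          exact absurd h'.2 (by decide)
    · -- inl x, inr 1
      have hH : Hrel G s₁ t₁ s₂ t₂ (Sum.inl x) (Sum.inr 1) ↔ x = t₂ := by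
        constructor
        · rintro (⟨-, h⟩ | ⟨h, -⟩)
          · exact absurd h (by decide)
          · exact h
        · intro h; exact Or.inr ⟨h, rfl⟩
      rw [hH]
      constructor
      · intro hx1
        exact Or.inr ⟨m₂, by omega, by rw [hGval m₂ le_rfl, h4, hx1], by
          rw [Nat.mod_eq_of_lt (by omega), hGu]⟩
      · rintro (⟨i, hi, hia, hib⟩ | ⟨i, hi, hia, hib⟩)
        · exfalso
          have h' := hFonly _ (Nat.mod_lt _ (by omega)) _ hib
          exact absurd h'.2 (by decide)
        · have him : i = m₂ := by
            have h' := hGonly _ (Nat.mod_lt _ (by omega)) _ hib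
            by_cases h1 : i = m₂ + 1
            · rw [h1, show m₂ + 1 + 1 = m₂ + 2 from rfl, Nat.mod_self] at h'
              omega
            · rw [Nat.mod_eq_of_lt (by omega)] at h'
              omega
          rw [him, hGval m₂ le_rfl] at hia
          have := Sum.inl.inj hia
          rw [← this, h4]
    · -- inr 0, inl y
      have hH : Hrel G s₁ t₁ s₂ t₂ (Sum.inr 0) (Sum.inl y) ↔ y = s₁ := by
        constructor
        · rintro (⟨-, h⟩ | ⟨h, -⟩)
          · exact h
          · exact absurd h (by decide)
        · intro h; exact Or.inl ⟨rfl, h⟩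
      rw [hH]
      constructor
      · intro hy1
        exact Or.inl ⟨m₁ + 1, by omega, hFu, by rw [hFwrap, hy1]⟩
      · rintro (⟨i, hi, hia, hib⟩ | ⟨i, hi, hia, hib⟩)
        · have him := (hFonly i hi 0 hia).1
          rw [him, hFwrap] at hib
          exact (Sum.inl.inj hib).symm
        · exact absurd (hGonly i hi 0 hia).2 (by decide)
    · -- inr 0, inr 0
      constructor
      · intro h; exact absurd h (by exact fun h => h)
      · rintro (⟨i, hi, hia, hib⟩ | ⟨i, hi, hia, hib⟩)
        · have him := (hFonly i hi 0 hia).1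
          rw [him, hFwrap] at hib; simp at hib
        · exact absurd (hGonly i hi 0 hia).2 (by decide)
    · -- inr 0, inr 1
      constructor
      · intro h; exact absurd h (by exact fun h => h)
      · rintro (⟨i, hi, hia, hib⟩ | ⟨i, hi, hia, hib⟩)
        · have him := (hFonly i hi 0 hia).1
          rw [him, hFwrap] at hib; simp at hib
        · exact absurd (hGonly i hi 0 hia).2 (by decide)
    · -- inr 1, inl y
      have hH : Hrel G s₁ t₁ s₂ t₂ (Sum.inr 1) (Sum.inl y) ↔ y = s₂ := by
        constructor
        · rintro (⟨h, -⟩ | ⟨-, h⟩)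
          · exact absurd h (by decide)
          · exact h
        · intro h; exact Or.inr ⟨rfl, h⟩
      rw [hH]
      constructor
      · intro hy1
        exact Or.inr ⟨m₂ + 1, by omega, hGu, by rw [hGwrap, hy1]⟩
      · rintro (⟨i, hi, hia, hib⟩ | ⟨i, hi, hia, hib⟩)
        · exact absurd (hFonly i hi 1 hia).2 (by decide)
        · have him := (hGonly i hi 1 hia).1
          rw [him, hGwrap] at hib
          exact (Sum.inl.inj hib).symm
    · -- inr 1, inr 0
      constructor
      · intro h; exact absurd h (by exact fun h => h)
      · rintro (⟨i, hi, hia, hib⟩ | ⟨i, hi, hia, hib⟩)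
        · exact absurd (hFonly i hi 1 hia).2 (by decide)
        · have him := (hGonly i hi 1 hia).1
          rw [him, hGwrap] at hib; simp at hib
    · -- inr 1, inr 1
      constructor
      · intro h; exact absurd h (by exact fun h => h)
      · rintro (⟨i, hi, hia, hib⟩ | ⟨i, hi, hia, hib⟩)
        · exact absurd (hFonly i hi 1 hia).2 (by decide)
        · have him := (hGonly i hi 1 hia).1
          rw [him, hGwrap] at hib; simp at hib


/-- Let `G` be an acyclic digraph with distinct vertices `s₁, t₁, s₂, t₂` and let `H` be
obtained from `G` by adding new vertices `u₁, u₂` and the arcs `t₁u₁, u₁s₁, t₂u₂, u₂s₂`.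
Then `H` contains, as an induced subdigraph, the disjoint union of two directed cycles with
no arcs between them if and only if `G` contains directed paths `P₁` from `s₁` to `t₁` and
`P₂` from `s₂` to `t₂` such that the subdigraph of `G` induced by `V(P₁) ∪ V(P₂)` is exactly
the disjoint union of `P₁` and `P₂`. -/
theorem stmt17 {V : Type*} (G : V → V → Prop)
    (hacyclic : ¬ ∃ n v, IsDiCycle G n v)
    (s₁ t₁ s₂ t₂ : V)
    (hd₁ : s₁ ≠ t₁) (hd₂ : s₁ ≠ s₂) (hd₃ : s₁ ≠ t₂) (hd₄ : t₁ ≠ s₂) (hd₅ : t₁ ≠ t₂)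
    (hd₆ : s₂ ≠ t₂) :
    (∃ (n₁ n₂ : ℕ) (f g : ℕ → V ⊕ Fin 2),
      2 ≤ n₁ ∧ 2 ≤ n₂ ∧ f n₁ = f 0 ∧ g n₂ = g 0 ∧
      (∀ i < n₁, ∀ j < n₁, f i = f j → i = j) ∧
      (∀ i < n₂, ∀ j < n₂, g i = g j → i = j) ∧
      (∀ i < n₁, ∀ j < n₂, f i ≠ g j) ∧
      (∀ a b : V ⊕ Fin 2,
        ((∃ i < n₁, f i = a) ∨ (∃ i < n₂, g i = a)) →
        ((∃ i < n₁, f i = b) ∨ (∃ i < n₂, g i = b)) →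
        (Hrel G s₁ t₁ s₂ t₂ a b ↔
          ((∃ i < n₁, f i = a ∧ f ((i + 1) % n₁) = b) ∨
            (∃ i < n₂, g i = a ∧ g ((i + 1) % n₂) = b))))) ↔
    (∃ (m₁ m₂ : ℕ) (P₁ P₂ : ℕ → V),
      P₁ 0 = s₁ ∧ P₁ m₁ = t₁ ∧ P₂ 0 = s₂ ∧ P₂ m₂ = t₂ ∧
      (∀ i ≤ m₁, ∀ j ≤ m₁, P₁ i = P₁ j → i = j) ∧
      (∀ i ≤ m₂, ∀ j ≤ m₂, P₂ i = P₂ j → i = j) ∧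
      (∀ i < m₁, G (P₁ i) (P₁ (i + 1))) ∧
      (∀ i < m₂, G (P₂ i) (P₂ (i + 1))) ∧
      (∀ i ≤ m₁, ∀ j ≤ m₂, P₁ i ≠ P₂ j) ∧
      (∀ a b : V,
        ((∃ i ≤ m₁, P₁ i = a) ∨ (∃ i ≤ m₂, P₂ i = a)) →
        ((∃ i ≤ m₁, P₁ i = b) ∨ (∃ i ≤ m₂, P₂ i = b)) →
        (G a b ↔
          ((∃ i < m₁, P₁ i = a ∧ P₁ (i + 1) = b) ∨
            (∃ i < m₂, P₂ i = a ∧ P₂ (i + 1) = b))))) :=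
  ⟨stmt17_fwd G hacyclic s₁ t₁ s₂ t₂, stmt17_bwd G s₁ t₁ s₂ t₂⟩
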